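/- In a finite tree (a finite connected acyclic simple graph), any two simple paths of maximum length share at least one vertex. -/

import Mathlib

open SimpleGraph Walk

private lemma aux_first {V : Type} {G : SimpleGraph V} (Q : V → Prop) :
    ∀ {x y : V} (r : G.Walk x y), Q y →
      ∃ w, Q w ∧ ∃ s : G.Walk x w, s.support.Sublist r.support ∧
        ∀ v ∈ s.support, Q v → v = w := by
  intro x y r
  induction r with
  | nil => exact fun h => ⟨_, h, Walk.nil, List.Sublist.refl _, fun v hv _ => by simpa using hv⟩
  | @cons u v y h r ih =>
    intro hy
    by_cases hu : Q u
    · exact ⟨u, hu, Walk.nil, by simp, by simp⟩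
    · obtain ⟨w, hw, s, hsub, hlast⟩ := ih hy
      refine ⟨w, hw, Walk.cons h s, ?_, ?_⟩
      · simpa using hsub.cons₂ u
      · intro v hv hQ
        rw [Walk.support_cons, List.mem_cons] at hv
        rcases hv with rfl | hv
        · exact absurd hQ hu
        · exact hlast v hv hQ

private lemma aux_append_path {V : Type} {G : SimpleGraph V} {u v w : V}
    {p : G.Walk u v} {q : G.Walk v w} (hp : p.IsPath) (hq : q.IsPath)
    (h : ∀ x ∈ p.support, x ∈ q.support → x = v) : (p.append q).IsPath := by
  rw [Walk.isPath_def, Walk.support_append, List.nodup_append]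
  refine ⟨hp.support_nodup, hq.support_nodup.tail, ?_⟩
  intro x hx y hx' hxy
  subst hxy
  have hxq : x ∈ q.support := List.mem_of_mem_tail hx'
  have : x = v := h x hx hxq
  subst this
  have := hq.support_nodup
  rw [Walk.support_eq_cons] at this
  exact (List.nodup_cons.mp this).1 hx'

/-- Any two simple paths of maximum length in a finite tree share at least one vertex.
A tree is a finite connected acyclic simple graph; a simple path is a walk whose
vertices are pairwise distinct (`IsPath`), measured by its number of vertices
(`support.length`). -/
theorem longest_paths_share_a_vertex {V : Type} [Fintype V] (G : SimpleGraph V)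
    (hG : G.IsTree) {a b c d : V} (p : G.Walk a b) (q : G.Walk c d)
    (hp : p.IsPath) (hq : q.IsPath)
    (hpmax : ∀ (x y : V) (r : G.Walk x y), r.IsPath → r.support.length ≤ p.support.length)
    (hqmax : ∀ (x y : V) (r : G.Walk x y), r.IsPath → r.support.length ≤ q.support.length) :
    ∃ v : V, v ∈ p.support ∧ v ∈ q.support := by
  classical
  by_contra hcon
  push_neg at hcon
  -- the two paths have the same length
  have hlen : q.length = p.length := by
    have h1 := hpmax _ _ q hq
    have h2 := hqmax _ _ p hp
    rw [Walk.length_support, Walk.length_support] at h1 h2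
    omega
  -- a path from `a` to `c`
  obtain ⟨r0⟩ := hG.isConnected.preconnected a c
  set r : G.Walk a c := r0.toPath.1 with hrdef
  have hrp : r.IsPath := r0.toPath.2
  -- first point of r on q
  obtain ⟨w, hwq, s1, hs1sub, hs1last⟩ :=
    aux_first (· ∈ q.support) r q.start_mem_support
  -- first point of s1.reverse on p
  obtain ⟨u, hup, s2, hs2sub, hs2last⟩ :=
    aux_first (· ∈ p.support) s1.reverse p.start_mem_support
  set s : G.Walk u w := s2.reverse with hsdef
  have hs2s1 : ∀ v ∈ s2.support, v ∈ s1.support := by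
    intro v hv
    have := hs2sub.subset hv
    rwa [Walk.support_reverse, List.mem_reverse] at this
  have hsp : ∀ v ∈ s.support, v ∈ p.support → v = u := by
    intro v hv hvp
    rw [hsdef, Walk.support_reverse, List.mem_reverse] at hv
    exact hs2last v hv hvp
  have hsq : ∀ v ∈ s.support, v ∈ q.support → v = w := by
    intro v hv hvq
    rw [hsdef, Walk.support_reverse, List.mem_reverse] at hv
    exact hs1last v (hs2s1 v hv) hvq
  have hspath : s.IsPath := by
    rw [hsdef, Walk.isPath_reverse_iff, Walk.isPath_def]
    exact hs2sub.nodup (by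
      rw [Walk.support_reverse]
      exact List.nodup_reverse.mpr (hs1sub.nodup hrp.support_nodup))
  have huw : u ≠ w := fun h => hcon u hup (h ▸ hwq)
  have hslen : 1 ≤ s.length := by
    rcases Nat.eq_zero_or_pos s.length with h0 | h1
    · exact absurd (Walk.eq_of_length_eq_zero h0) huw
    · exact h1
  -- the long half of p ending at u
  have hpa : ∃ (x : V) (pa : G.Walk x u), pa.IsPath ∧
      (∀ v ∈ pa.support, v ∈ p.support) ∧ p.length ≤ 2 * pa.length := by
    have hsplit : (p.takeUntil u hup).length + (p.dropUntil u hup).length = p.length := by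
      have := congrArg Walk.length (Walk.take_spec p hup)
      rwa [Walk.length_append] at this
    rcases le_total (p.dropUntil u hup).length (p.takeUntil u hup).length with h | h
    · exact ⟨a, p.takeUntil u hup, hp.takeUntil hup,
        fun v hv => Walk.support_takeUntil_subset p hup hv, by omega⟩
    · refine ⟨b, (p.dropUntil u hup).reverse, (hp.dropUntil hup).reverse, ?_, ?_⟩
      · intro v hv
        rw [Walk.support_reverse, List.mem_reverse] at hv
        exact Walk.support_dropUntil_subset p hup hv
      · rw [Walk.length_reverse]; omega
  -- the long half of q starting at w
  have hqb : ∃ (y : V) (qb : G.Walk w y), qb.IsPath ∧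
      (∀ v ∈ qb.support, v ∈ q.support) ∧ p.length ≤ 2 * qb.length := by
    have hsplit : (q.takeUntil w hwq).length + (q.dropUntil w hwq).length = q.length := by
      have := congrArg Walk.length (Walk.take_spec q hwq)
      rwa [Walk.length_append] at this
    rcases le_total (q.takeUntil w hwq).length (q.dropUntil w hwq).length with h | h
    · exact ⟨d, q.dropUntil w hwq, hq.dropUntil hwq,
        fun v hv => Walk.support_dropUntil_subset q hwq hv, by omega⟩
    · refine ⟨c, (q.takeUntil w hwq).reverse, (hq.takeUntil hwq).reverse, ?_, ?_⟩
      · intro v hv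
        rw [Walk.support_reverse, List.mem_reverse] at hv
        exact Walk.support_takeUntil_subset q hwq hv
      · rw [Walk.length_reverse]; omega
  obtain ⟨x, pa, hpa1, hpa2, hpa3⟩ := hpa
  obtain ⟨y, qb, hqb1, hqb2, hqb3⟩ := hqb
  -- glue
  have hsq_path : (s.append qb).IsPath := by
    apply aux_append_path hspath hqb1
    intro v hv hv'
    exact hsq v hv (hqb2 v hv')
  have hF : (pa.append (s.append qb)).IsPath := by
    apply aux_append_path hpa1 hsq_path
    intro v hv hv'
    rw [Walk.mem_support_append_iff] at hv'
    rcases hv' with hv' | hv'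
    · exact hsp v hv' (hpa2 v hv)
    · exact absurd (hqb2 v hv') (hcon v (hpa2 v hv))
  have hle := hpmax _ _ _ hF
  rw [Walk.length_support, Walk.length_support, Walk.length_append, Walk.length_append] at hle
  omega
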